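/- Let p_{kj}, p_{ℓj} ∈ (0,1) for j ∈ [n] satisfy max_j max(p_{kj}, p_{ℓj}) = p* ≤ 1 − ε for a constant ε ∈ (0,1). Then there exists a constant C_ε depending only on ε such that for every α ∈ [0,1], the Chernoff α-divergence of the corresponding product Bernoulli distributions satisfies D_α(p_{k*}‖p_{ℓ*}) = ∑_{j=1}^n −log[ p_{kj}^{1−α} p_{ℓj}^α + (1−p_{kj})^{1−α}(1−p_{ℓj})^α ] ≤ C_ε n p*. In particular the Chernoff information D*(p_{k*}‖p_{ℓ*}) = sup_{α∈(0,1)} D_α(p_{k*}‖p_{ℓ*}) is at most C_ε n p*. -/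

import Mathlib

open Finset

lemma aux_term_bound (ε : ℝ) (hε : ε ∈ Set.Ioo (0 : ℝ) 1)
    (p q pstar α : ℝ) (hp : p ∈ Set.Ioo (0:ℝ) 1) (hq : q ∈ Set.Ioo (0:ℝ) 1)
    (hpp : p ≤ pstar) (hqp : q ≤ pstar) (hps : pstar ≤ 1 - ε)
    (hα : α ∈ Set.Icc (0:ℝ) 1) :
    -Real.log (p ^ (1 - α) * q ^ α + (1 - p) ^ (1 - α) * (1 - q) ^ α) ≤ ε⁻¹ * pstar := by
  obtain ⟨hε0, hε1⟩ := hε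
  have h1p : (0:ℝ) < 1 - pstar := by linarith
  have hps0 : 0 < pstar := lt_of_lt_of_le hp.1 hpp
  have hα0 : 0 ≤ α := hα.1
  have hα1 : 0 ≤ 1 - α := by linarith [hα.2]
  have key : 1 - pstar ≤ p ^ (1 - α) * q ^ α + (1 - p) ^ (1 - α) * (1 - q) ^ α := by
    have h1 : (1 - pstar) ^ (1 - α) ≤ (1 - p) ^ (1 - α) :=
      Real.rpow_le_rpow h1p.le (by linarith) hα1
    have h2 : (1 - pstar) ^ α ≤ (1 - q) ^ α :=
      Real.rpow_le_rpow h1p.le (by linarith) hα0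
    have h3 : (1 - pstar) = (1 - pstar) ^ (1 - α) * (1 - pstar) ^ α := by
      rw [← Real.rpow_add h1p, sub_add_cancel, Real.rpow_one]
    have h4 : (1 - pstar) ^ (1 - α) * (1 - pstar) ^ α ≤ (1 - p) ^ (1 - α) * (1 - q) ^ α :=
      mul_le_mul h1 h2 (Real.rpow_nonneg h1p.le _)
        (Real.rpow_nonneg (by linarith [hp.2]) _)
    have h5 : 0 ≤ p ^ (1 - α) * q ^ α :=
      mul_nonneg (Real.rpow_nonneg hp.1.le _) (Real.rpow_nonneg hq.1.le _)
    linarith [h3 ▸ h4]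
  have hlog : -Real.log (p ^ (1 - α) * q ^ α + (1 - p) ^ (1 - α) * (1 - q) ^ α)
      ≤ -Real.log (1 - pstar) :=
    neg_le_neg (Real.log_le_log h1p key)
  have h6 : -Real.log (1 - pstar) = Real.log (1 - pstar)⁻¹ := (Real.log_inv _).symm
  have h7 : Real.log (1 - pstar)⁻¹ ≤ (1 - pstar)⁻¹ - 1 :=
    Real.log_le_sub_one_of_pos (inv_pos.mpr h1p)
  have h8 : (1 - pstar)⁻¹ - 1 = pstar / (1 - pstar) := by field_simp; ring
  have h9 : pstar / (1 - pstar) ≤ pstar / ε := by gcongr; linarith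
  have h10 : pstar / ε = ε⁻¹ * pstar := by ring
  linarith [hlog, h6 ▸ h7, h8 ▸ h9, h10 ▸ h9]

/-- **Chernoff information is at most of order `n p*`** (Lemma 12).
If all Bernoulli parameters are at most `p* ≤ 1 − ε`, then for every `α ∈ [0,1]` the
Chernoff α-divergence of the product Bernoulli distributions is at most `C_ε n p*`, and
hence so is the Chernoff information. -/
theorem stmt_19 (ε : ℝ) (hε : ε ∈ Set.Ioo (0 : ℝ) 1) :
    ∃ C : ℝ, 0 < C ∧
      ∀ (n : ℕ) (p q : Fin n → ℝ) (pstar : ℝ),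
        (∀ j, p j ∈ Set.Ioo (0 : ℝ) 1) → (∀ j, q j ∈ Set.Ioo (0 : ℝ) 1) →
        IsGreatest (Set.range p ∪ Set.range q) pstar →
        pstar ≤ 1 - ε →
        (∀ α ∈ Set.Icc (0 : ℝ) 1,
          (∑ j, -Real.log (p j ^ (1 - α) * q j ^ α +
              (1 - p j) ^ (1 - α) * (1 - q j) ^ α)) ≤ C * n * pstar) ∧
        sSup ((fun α : ℝ => ∑ j, -Real.log (p j ^ (1 - α) * q j ^ α +
            (1 - p j) ^ (1 - α) * (1 - q j) ^ α)) '' Set.Ioo 0 1) ≤ C * n * pstar := by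
  refine ⟨ε⁻¹, inv_pos.mpr hε.1, ?_⟩
  intro n p q pstar hp hq hgreat hps
  have hpub : ∀ j, p j ≤ pstar := fun j => hgreat.2 (Or.inl ⟨j, rfl⟩)
  have hqub : ∀ j, q j ≤ pstar := fun j => hgreat.2 (Or.inr ⟨j, rfl⟩)
  have hps0 : 0 ≤ pstar := by
    rcases hgreat.1 with ⟨j, rfl⟩ | ⟨j, rfl⟩
    exacts [(hp j).1.le, (hq j).1.le]
  have hmain : ∀ α ∈ Set.Icc (0:ℝ) 1,
      (∑ j, -Real.log (p j ^ (1 - α) * q j ^ α +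
        (1 - p j) ^ (1 - α) * (1 - q j) ^ α)) ≤ ε⁻¹ * n * pstar := by
    intro α hα
    calc (∑ j, -Real.log (p j ^ (1 - α) * q j ^ α +
          (1 - p j) ^ (1 - α) * (1 - q j) ^ α))
        ≤ ∑ _j : Fin n, ε⁻¹ * pstar := by
          refine Finset.sum_le_sum fun j _ => ?_
          exact aux_term_bound ε hε (p j) (q j) pstar α (hp j) (hq j)
            (hpub j) (hqub j) hps hα
      _ = ε⁻¹ * n * pstar := by
          rw [Finset.sum_const, Finset.card_univ, Fintype.card_fin, nsmul_eq_mul]; ring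
  refine ⟨hmain, ?_⟩
  refine Real.sSup_le ?_ (by have h := hε.1; positivity)
  rintro x ⟨α, hα, rfl⟩
  exact hmain α ⟨hα.1.le, hα.2.le⟩
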